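/- If T is a tree on n vertices, then α_4(T) ≥ 3n/4, where α_4 denotes the generalized 4-independence number. -/

import Mathlib

/-- `S` is a generalized `k`-independent set of `G`: the induced subgraph `G[S]` contains no
tree on `k` vertices as a subgraph, equivalently every connected component of `G[S]` has
fewer than `k` vertices, equivalently every connected induced subgraph inside `S` has
fewer than `k` vertices. -/
def SimpleGraph.IsGenIndepSet {V : Type*} (G : SimpleGraph V) (k : ℕ) (S : Finset V) : Prop :=
  ∀ T : Finset V, T ⊆ S → (G.induce (T : Set V)).Connected → T.card < k

/-- The generalized `k`-independence number `α_k(G)`, the maximum cardinality of a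
generalized `k`-independent set. -/
noncomputable def SimpleGraph.genIndepNum {V : Type*} (G : SimpleGraph V) (k : ℕ) : ℕ :=
  sSup {n | ∃ S : Finset V, G.IsGenIndepSet k S ∧ S.card = n}


open SimpleGraph Walk Finset

namespace GenIndepAux

variable {V : Type*} {G : SimpleGraph V}

noncomputable def pth (ht : G.IsTree) (a b : V) : G.Walk a b :=
  (ht.existsUnique_path a b).exists.choose

lemma pth_isPath (ht : G.IsTree) (a b : V) : (pth ht a b).IsPath :=
  (ht.existsUnique_path a b).exists.choose_spec

lemma pth_eq (ht : G.IsTree) {a b : V} {p : G.Walk a b} (hp : p.IsPath) :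
    p = pth ht a b :=
  (ht.existsUnique_path a b).unique hp (pth_isPath ht a b)

lemma pth_self (ht : G.IsTree) (a : V) : pth ht a a = Walk.nil :=
  (pth_eq ht Walk.IsPath.nil).symm

/-- transitivity of "on the path to the root" -/
lemma mem_trans [DecidableEq V] (ht : G.IsTree) {r a b v : V}
    (h1 : a ∈ (pth ht b r).support) (h2 : v ∈ (pth ht a r).support) :
    v ∈ (pth ht b r).support := by
  have hd : ((pth ht b r).dropUntil a h1).IsPath := (pth_isPath ht b r).dropUntil h1
  have he := pth_eq ht hd
  rw [← he] at h2
  exact (pth ht b r).support_dropUntil_subset h1 h2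

lemma length_lt [DecidableEq V] (ht : G.IsTree) {r a b : V}
    (h1 : b ∈ (pth ht a r).support) (hne : b ≠ a) :
    (pth ht b r).length < (pth ht a r).length := by
  have hd : ((pth ht a r).dropUntil b h1).IsPath := (pth_isPath ht a r).dropUntil h1
  have he := pth_eq ht hd
  have hlen := congrArg Walk.length ((pth ht a r).take_spec h1)
  rw [Walk.length_append, he] at hlen
  have h0 : ((pth ht a r).takeUntil b h1).length ≠ 0 := by
    intro h
    exact hne (Walk.eq_of_length_eq_zero h).symm
  omega

lemma adj_cases (ht : G.IsTree) {a b : V} (r : V) (hab : G.Adj a b) :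
    a ∈ (pth ht b r).support ∨ b ∈ (pth ht a r).support := by
  by_cases h : a ∈ (pth ht b r).support
  · exact Or.inl h
  · right
    have hp : (Walk.cons hab (pth ht b r)).IsPath := (pth_isPath ht b r).cons h
    rw [← pth_eq ht hp]
    exact List.mem_cons_of_mem _ (Walk.start_mem_support _)

lemma closure [DecidableEq V] (ht : G.IsTree) {r v a b : V}
    (hva : v ∈ (pth ht a r).support) (hav : a ≠ v) (hab : G.Adj a b) :
    v ∈ (pth ht b r).support := by
  by_cases hb : b ∈ (pth ht a r).support
  · have hdrop : ((pth ht a r).dropUntil b hb).IsPath := (pth_isPath ht a r).dropUntil hb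
    have he := pth_eq ht hdrop
    rw [← he]
    have hv' := hva
    rw [← (pth ht a r).take_spec hb, Walk.mem_support_append_iff] at hv'
    rcases hv' with hv' | hv'
    · -- the takeUntil part is the single edge a-b
      have h1 : (Walk.cons hab Walk.nil).IsPath := by
        simp [hab.ne]
      have h2 : ((pth ht a r).takeUntil b hb).IsPath := (pth_isPath ht a r).takeUntil hb
      have h3 : (pth ht a r).takeUntil b hb = Walk.cons hab Walk.nil :=
        (ht.existsUnique_path a b).unique h2 h1
      rw [h3] at hv'
      simp only [Walk.support_cons, Walk.support_nil, List.mem_cons,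
        List.mem_singleton] at hv'
      rcases hv' with hv' | hv' | hv'
      · exact absurd hv'.symm hav
      · rw [hv']; exact Walk.start_mem_support _
      · exact absurd hv' (by simp)
    · exact hv'
  · have hp : (Walk.cons hab.symm (pth ht a r)).IsPath := (pth_isPath ht a r).cons hb
    rw [← pth_eq ht hp]
    exact List.mem_cons_of_mem _ hva

lemma reach_induce {s : Set V} {a b : V} (p : G.Walk a b)
    (hp : ∀ x ∈ p.support, x ∈ s) (ha : a ∈ s) (hb : b ∈ s) :
    (G.induce s).Reachable ⟨a, ha⟩ ⟨b, hb⟩ := by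
  induction p with
  | nil => exact Reachable.refl _
  | @cons u c w h q ih =>
    have hc : c ∈ s := hp c (by simp [Walk.support_cons])
    have h1 : (G.induce s).Adj ⟨u, ha⟩ ⟨c, hc⟩ := by
      simpa using h
    exact h1.reachable.trans
      (ih (fun x hx => hp x (by simp [Walk.support_cons, hx])) hc hb)

lemma support_pth_subset [DecidableEq V] (ht : G.IsTree) {W : Finset V}
    (hc : (G.induce (W : Set V)).Connected) {a r : V} (ha : a ∈ W) (hr : r ∈ W) :
    ∀ x ∈ (pth ht a r).support, x ∈ W := by
  obtain ⟨q⟩ := hc.preconnected ⟨a, Finset.mem_coe.mpr ha⟩ ⟨r, Finset.mem_coe.mpr hr⟩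
  have hq' : ((q.map (SimpleGraph.Embedding.induce (W : Set V)).toHom).bypass : G.Walk a r).IsPath :=
    Walk.bypass_isPath _
  have he : (q.map (SimpleGraph.Embedding.induce (W : Set V)).toHom).bypass = pth ht a r :=
    pth_eq ht hq'
  intro x hx
  rw [← he] at hx
  have h1 := Walk.support_bypass_subset _ hx
  erw [Walk.support_map] at h1
  obtain ⟨y, _, rfl⟩ := List.mem_map.mp h1
  exact Finset.mem_coe.mp y.2

lemma closure_prop {T : Finset V} (hTc : (G.induce (T : Set V)).Connected)
    (Q : V → Prop) (hstep : ∀ a ∈ T, ∀ b ∈ T, G.Adj a b → Q a → Q b)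
    {t0 : V} (ht0 : t0 ∈ T) (hQ0 : Q t0) : ∀ x ∈ T, Q x := by
  intro x hx
  obtain ⟨p⟩ := hTc.preconnected ⟨t0, Finset.mem_coe.mpr ht0⟩ ⟨x, Finset.mem_coe.mpr hx⟩
  have key : ∀ (a b : ↥(T : Set V)) (p : (G.induce (T : Set V)).Walk a b), Q a → Q b := by
    intro a b p
    induction p with
    | nil => exact id
    | @cons u c w h q ih =>
      intro hq
      exact ih (hstep _ (Finset.mem_coe.mp u.2) _ (Finset.mem_coe.mp c.2) (by simpa using h) hq)
  exact key _ _ p hQ0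

end GenIndepAux

namespace GenIndepAux

variable {V : Type*} {G : SimpleGraph V}

lemma main [Fintype V] [DecidableEq V] (ht : G.IsTree) :
    ∀ (n : ℕ) (W : Finset V), W.card = n → (G.induce (W : Set V)).Connected →
      ∃ S : Finset V, S ⊆ W ∧
        (∀ T : Finset V, T ⊆ S → (G.induce (T : Set V)).Connected → T.card ≤ 3) ∧
        3 * W.card ≤ 4 * S.card := by
  intro n
  induction n using Nat.strong_induction_on with
  | _ n ih =>
  intro W hW hWc
  by_cases hsmall : W.card ≤ 3
  · exact ⟨W, subset_rfl, fun T hT _ => le_trans (card_le_card hT) hsmall, by omega⟩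
  push_neg at hsmall
  have hWne : W.Nonempty := card_pos.mp (by omega)
  obtain ⟨r, hr⟩ := hWne
  have hpathW : ∀ a ∈ W, ∀ x ∈ (pth ht a r).support, x ∈ W :=
    fun a ha => support_pth_subset ht hWc ha hr
  set Sub : V → Finset V := fun v => W.filter (fun u => v ∈ (pth ht u r).support) with hSubdef
  have hSubW : ∀ v, Sub v ⊆ W := fun v => filter_subset _ _
  have hSubr : Sub r = W := by
    apply filter_true_of_mem
    intro u _
    exact Walk.end_mem_support _
  have hΦr : r ∈ W.filter (fun u => 4 ≤ (Sub u).card) :=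
    mem_filter.mpr ⟨hr, by rw [hSubr]; omega⟩
  obtain ⟨v, hvΦ, hvmax⟩ :=
    exists_max_image (W.filter (fun u => 4 ≤ (Sub u).card))
      (fun u => (pth ht u r).length) ⟨r, hΦr⟩
  obtain ⟨hvW, hvcard⟩ := mem_filter.mp hvΦ
  have hvSub : v ∈ Sub v := mem_filter.mpr ⟨hvW, Walk.start_mem_support _⟩
  have hmax : ∀ u ∈ W, (pth ht v r).length < (pth ht u r).length → (Sub u).card ≤ 3 := by
    intro u hu hlen
    by_contra h
    push_neg at h
    have hu' : u ∈ W.filter (fun u => 4 ≤ (Sub u).card) := mem_filter.mpr ⟨hu, by omega⟩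
    exact absurd (hvmax u hu') (by omega)
  set A := (Sub v).erase v with hAdef
  have hAW : A ⊆ W := (erase_subset _ _).trans (hSubW v)
  have hcomp : ∀ T : Finset V, T ⊆ A → (G.induce (T : Set V)).Connected → T.card ≤ 3 := by
    intro T hTA hTc
    obtain ⟨⟨t0, ht0⟩⟩ := hTc.nonempty
    have ht0T : t0 ∈ T := Finset.mem_coe.mp ht0
    obtain ⟨t, htT, htmin⟩ := exists_min_image T (fun u => (pth ht u r).length) ⟨t0, ht0T⟩
    have htA : t ∈ A := hTA htT
    have hsub : ∀ x ∈ T, t ∈ (pth ht x r).support := by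
      refine closure_prop hTc _ ?_ htT (Walk.start_mem_support _)
      intro a _ b hbT hab hQa
      by_cases hat : a = t
      · subst hat
        rcases adj_cases ht r hab with h | h
        · exact h
        · exfalso
          have := length_lt ht h (fun hba => hab.ne hba.symm)
          exact absurd (htmin b hbT) (by omega)
      · exact closure ht hQa hat hab
    have hTsub : T ⊆ Sub t := by
      intro x hx
      exact mem_filter.mpr ⟨hAW (hTA hx), hsub x hx⟩
    have ht3 : (Sub t).card ≤ 3 := by
      apply hmax t (hAW htA)
      obtain ⟨htv, htS⟩ := mem_erase.mp htA
      exact length_lt ht (mem_filter.mp htS).2 (Ne.symm htv)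
    exact le_trans (card_le_card hTsub) ht3
  have hAcard : A.card = (Sub v).card - 1 := card_erase_of_mem hvSub
  set R := W \ Sub v with hRdef
  by_cases hRe : R = ∅
  · refine ⟨A, hAW, hcomp, ?_⟩
    have hSW : Sub v = W := by
      apply subset_antisymm (hSubW v)
      rwa [← sdiff_eq_empty_iff_subset]
    have := card_le_card (hSubW v)
    rw [hAcard, hSW]
    omega
  · have hRne : R.Nonempty := nonempty_iff_ne_empty.mpr hRe
    have hvr : v ≠ r := by
      rintro rfl
      rw [hRdef, hSubr, sdiff_self] at hRe
      exact hRe rfl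
    have hrR : r ∈ R := by
      refine mem_sdiff.mpr ⟨hr, fun h => ?_⟩
      have := (mem_filter.mp h).2
      rw [pth_self ht r] at this
      simp only [Walk.support_nil, List.mem_singleton] at this
      exact hvr this
    have hRpath : ∀ b ∈ R, ∀ x ∈ (pth ht b r).support, x ∈ R := by
      intro b hb x hx
      have hbW := (mem_sdiff.mp hb).1
      have hxW := hpathW b hbW x hx
      refine mem_sdiff.mpr ⟨hxW, fun hxS => ?_⟩
      have hvx := (mem_filter.mp hxS).2
      have : v ∈ (pth ht b r).support := mem_trans ht hx hvx
      exact (mem_sdiff.mp hb).2 (mem_filter.mpr ⟨hbW, this⟩)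
    have hRc : (G.induce (R : Set V)).Connected := by
      rw [connected_iff]
      refine ⟨?_, ⟨⟨r, Finset.mem_coe.mpr hrR⟩⟩⟩
      intro x y
      have hx := Finset.mem_coe.mp x.2
      have hy := Finset.mem_coe.mp y.2
      have h1 : (G.induce (R : Set V)).Reachable ⟨(x : V), x.2⟩ ⟨r, Finset.mem_coe.mpr hrR⟩ :=
        reach_induce (pth ht (x : V) r)
          (fun z hz => Finset.mem_coe.mpr (hRpath _ hx z hz)) x.2 (Finset.mem_coe.mpr hrR)
      have h2 : (G.induce (R : Set V)).Reachable ⟨(y : V), y.2⟩ ⟨r, Finset.mem_coe.mpr hrR⟩ :=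
        reach_induce (pth ht (y : V) r)
          (fun z hz => Finset.mem_coe.mpr (hRpath _ hy z hz)) y.2 (Finset.mem_coe.mpr hrR)
      exact h1.trans h2.symm
    have hRcard : R.card < n := by
      rw [← hW]
      exact card_lt_card ⟨sdiff_subset, fun h => (mem_sdiff.mp (h hvW)).2 hvSub⟩
    obtain ⟨S', hS'R, hS'comp, hS'card⟩ := ih R.card hRcard R rfl hRc
    have hvnR : v ∉ R := fun h => (mem_sdiff.mp h).2 hvSub
    refine ⟨A ∪ S', union_subset hAW (hS'R.trans sdiff_subset), ?_, ?_⟩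
    · intro T hT hTc
      by_cases hTA : ∃ t ∈ T, t ∈ A
      · obtain ⟨t0, ht0T, ht0A⟩ := hTA
        have hall : ∀ x ∈ T, x ∈ A := by
          refine closure_prop hTc _ ?_ ht0T ht0A
          intro a _ b hbT hab hQa
          obtain ⟨hav, haS⟩ := mem_erase.mp hQa
          have hbW : b ∈ W := by
            rcases mem_union.mp (hT hbT) with h | h
            · exact hAW h
            · exact sdiff_subset (hS'R h)
          have hvb : v ∈ (pth ht b r).support := closure ht (mem_filter.mp haS).2 hav hab
          have hbv : b ≠ v := by
            rintro rfl
            rcases mem_union.mp (hT hbT) with h | h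
            · exact (mem_erase.mp h).1 rfl
            · exact hvnR (hS'R h)
          exact mem_erase.mpr ⟨hbv, mem_filter.mpr ⟨hbW, hvb⟩⟩
        exact hcomp T (fun x hx => hall x hx) hTc
      · push_neg at hTA
        have hTS' : T ⊆ S' := fun x hx => (mem_union.mp (hT hx)).resolve_left (hTA x hx)
        exact hS'comp T hTS' hTc
    · have hdisj : Disjoint A S' := by
        refine disjoint_left.mpr fun x hxA hxS' => ?_
        exact (mem_sdiff.mp (hS'R hxS')).2 (mem_erase.mp hxA).2
      rw [card_union_of_disjoint hdisj, hAcard]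
      have h1 : R.card = W.card - (Sub v).card := card_sdiff_of_subset (hSubW v)
      have h2 : (Sub v).card ≤ W.card := card_le_card (hSubW v)
      omega

end GenIndepAux

/-- If `T` is a tree on `n` vertices, then `α₄(T) ≥ 3n/4`. -/
theorem genIndepNum_tree_ge {V : Type*} [Fintype V] (G : SimpleGraph V)
    (hconn : G.Connected) (hacyc : G.IsAcyclic) :
    (G.genIndepNum 4 : ℚ) ≥ 3 * (Nat.card V : ℚ) / 4 := by
  classical
  have ht : G.IsTree := ⟨hconn, hacyc⟩
  have huc : (G.induce ((Finset.univ : Finset V) : Set V)).Connected := by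
    rw [SimpleGraph.connected_iff]
    constructor
    · intro x y
      obtain ⟨p⟩ := hconn.preconnected (x : V) (y : V)
      exact GenIndepAux.reach_induce p (fun z _ => by simp) x.2 y.2
    · exact ⟨⟨hconn.nonempty.some, by simp⟩⟩
  obtain ⟨S, -, hScomp, hScard⟩ :=
    GenIndepAux.main ht (Finset.univ : Finset V).card Finset.univ rfl huc
  have hgen : G.IsGenIndepSet 4 S := by
    intro T hT hTc
    have := hScomp T hT hTc
    omega
  have hbdd : BddAbove {n | ∃ S : Finset V, G.IsGenIndepSet 4 S ∧ S.card = n} := by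
    refine ⟨Fintype.card V, fun m hm => ?_⟩
    obtain ⟨S', -, rfl⟩ := hm
    exact Finset.card_le_univ S'
  have hle : S.card ≤ G.genIndepNum 4 := le_csSup hbdd ⟨S, hgen, rfl⟩
  have h3 : 3 * Fintype.card V ≤ 4 * S.card := by
    rwa [Finset.card_univ] at hScard
  have h4 : (3 * Fintype.card V : ℚ) ≤ 4 * (G.genIndepNum 4 : ℚ) := by
    have : 3 * Fintype.card V ≤ 4 * G.genIndepNum 4 := le_trans h3 (by omega)
    exact_mod_cast this
  rw [Nat.card_eq_fintype_card, ge_iff_le, div_le_iff₀ (by norm_num : (0:ℚ) < 4)]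
  push_cast at h4 ⊢
  linarith
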